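/- Let G be the group ⟨a, b | a^k = b^{ql} = 1, b a b^{-1} = a^n⟩ with q prime, n^q ≡ 1 (mod k), n ≢ 1 (mod k), and c = gcd(n-1, k). For any integer j not divisible by q, gcd(n^j - 1, k) = c. -/

import Mathlib

theorem stmt_7 (k q : ℕ) (n : ℤ) (hk : 0 < k) (hq : q.Prime)
    (hnq : n ^ q ≡ 1 [ZMOD (k : ℤ)]) (hn1 : ¬ n ≡ 1 [ZMOD (k : ℤ)]) :
    ∀ j : ℕ, ¬ q ∣ j → Int.gcd (n ^ j - 1) (k : ℤ) = Int.gcd (n - 1) (k : ℤ) := by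
  intro j hj
  have hcop : Nat.Coprime j q := (hq.coprime_iff_not_dvd.mpr hj).symm
  obtain ⟨m, -, hm⟩ := Nat.exists_mul_mod_eq_one_of_coprime hcop hq.one_lt
  have hm' : j * m = q * (j * m / q) + 1 := by
    have := Nat.div_add_mod (j * m) q
    omega
  set v := j * m / q with hv
  apply Nat.dvd_antisymm
  · -- gcd(n^j-1,k) ∣ gcd(n-1,k)
    set d : ℤ := (Int.gcd (n ^ j - 1) (k : ℤ) : ℤ) with hd
    have h1 : d ∣ n ^ j - 1 := Int.gcd_dvd_left _ _
    have h2 : d ∣ (k : ℤ) := Int.gcd_dvd_right _ _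
    have h3 : n ^ j ≡ 1 [ZMOD d] :=
      (Int.modEq_iff_dvd.mpr (by simpa using h1)).symm
    have h4 : n ^ q ≡ 1 [ZMOD d] := hnq.of_dvd h2
    have hjm : n ^ (j * m) ≡ 1 [ZMOD d] := by
      have := h3.pow m
      rw [← pow_mul] at this
      simpa using this
    have hqv : n ^ (q * v) ≡ 1 [ZMOD d] := by
      have := h4.pow v
      rw [← pow_mul] at this
      simpa using this
    have hne : n ≡ 1 [ZMOD d] := by
      have h5 : n ^ (q * v) * n ≡ 1 * n [ZMOD d] := hqv.mul_right n
      have h6 : n ^ (q * v + 1) = n ^ (q * v) * n := by ring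
      have h7 : n ^ (j * m) = n ^ (q * v) * n := by rw [hm', h6]
      calc n ≡ n ^ (q * v) * n [ZMOD d] := by simpa using h5.symm
        _ = n ^ (j * m) := h7.symm
        _ ≡ 1 [ZMOD d] := hjm
    have h8 : d ∣ n - 1 := hne.symm.dvd
    exact Int.natCast_dvd_natCast.mp (Int.dvd_coe_gcd h8 h2)
  · have h1 : ((Int.gcd (n - 1) (k : ℤ) : ℤ)) ∣ n ^ j - 1 := by
      have : (n - 1) ∣ n ^ j - 1 := by
        have := sub_dvd_pow_sub_pow n 1 j
        simpa using this
      exact (Int.gcd_dvd_left _ _).trans this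
    exact Int.natCast_dvd_natCast.mp (Int.dvd_coe_gcd h1 (Int.gcd_dvd_right _ _))
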